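/- If a single-peaked unweighted Borda manipulation instance (with harmonious order L, all manipulator votes required to be coincident with L) has a successful manipulation, then it has a successful manipulation in which every manipulator places the distinguished candidate p in his or her highest position. -/

import Mathlib

/-- A vote `π` is coincident with (single-peaked w.r.t.) a societal order `L`. -/
def Coincident {C : Type*} {n : ℕ} (L π : C ≃ Fin n) : Prop :=
  ∀ a b c : C, ((L a < L b ∧ L b < L c) ∨ (L c < L b ∧ L b < L a)) →
    π b < π c → π a < π b

section Aux

variable {m : ℕ}

/-- Single-peakedness (w.r.t. the identity order) with peak `x` implies coincidence. -/
lemma sp_coincident (σ : Fin (m+1) ≃ Fin (m+1)) (x : Fin (m+1))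
    (hup : ∀ i j : Fin (m+1), i < j → j ≤ x → σ i < σ j)
    (hdown : ∀ i j : Fin (m+1), x ≤ j → j < i → σ i < σ j) :
    Coincident (Equiv.refl (Fin (m+1))) σ := by
  intro a b c hbet hbc
  simp only [Equiv.refl_apply] at hbet
  rcases hbet with ⟨h1, h2⟩ | ⟨h1, h2⟩
  · by_cases hbx : b ≤ x
    · exact hup a b h1 hbx
    · exact absurd hbc (not_lt.mpr (le_of_lt (hdown c b (le_of_not_ge hbx) h2)))
  · by_cases hxb : x ≤ b
    · exact hdown a b hxb h2
    · exact absurd hbc (not_lt.mpr (le_of_lt (hup c b h1 (le_of_not_ge hxb))))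

lemma coincident_rev (σ : Fin (m+1) ≃ Fin (m+1))
    (h : Coincident (Equiv.refl (Fin (m+1))) σ) :
    Coincident (Equiv.refl (Fin (m+1))) (Fin.revPerm.trans σ) := by
  intro a b c hbet hbc
  simp only [Equiv.refl_apply] at hbet
  simp only [Equiv.trans_apply, Fin.revPerm_apply] at hbc ⊢
  refine h a.rev b.rev c.rev ?_ hbc
  simp only [Equiv.refl_apply]
  rcases hbet with ⟨h1, h2⟩ | ⟨h1, h2⟩
  · exact Or.inr ⟨Fin.rev_lt_rev.mpr h2, Fin.rev_lt_rev.mpr h1⟩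
  · exact Or.inl ⟨Fin.rev_lt_rev.mpr h2, Fin.rev_lt_rev.mpr h1⟩

lemma cases_side (σ : Fin (m+1) ≃ Fin (m+1)) (q : Fin (m+1))
    (hσ : Coincident (Equiv.refl (Fin (m+1))) σ) :
    (∀ i, σ q < σ i → q < i) ∨ (∀ i, σ q < σ i → i < q) := by
  by_contra hcon
  push_neg at hcon
  obtain ⟨⟨i, hi, hiq⟩, ⟨j, hj, hjq⟩⟩ := hcon
  have hiq' : i < q := hiq.lt_of_ne (fun he => by rw [he] at hi; exact lt_irrefl _ hi)
  have hjq' : q < j := hjq.lt_of_ne (fun he => by rw [← he] at hj; exact lt_irrefl _ hj)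
  have := hσ i q j (Or.inl ⟨hiq', hjq'⟩) hj
  exact absurd hi (not_lt.mpr (le_of_lt this))

lemma keyA (σ : Fin (m+1) ≃ Fin (m+1)) (q : Fin (m+1))
    (hσ : Coincident (Equiv.refl (Fin (m+1))) σ)
    (hplus : ∀ i, σ q < σ i → q < i) :
    ∃ σ' : Fin (m+1) ≃ Fin (m+1),
      Coincident (Equiv.refl (Fin (m+1))) σ' ∧ ((σ' q : ℕ) = m) ∧
      ∀ i, (σ' i : ℕ) ≤ (σ i : ℕ) + (m - (σ q : ℕ)) := by
  classical
  set r : ℕ := (σ q : ℕ) with hr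
  have hrm : r ≤ m := Nat.lt_succ_iff.mp (σ q).isLt
  -- convexity of the upper contour set of q
  have conv : ∀ i j l : Fin (m+1), i < j → j < l → σ q ≤ σ i → σ q ≤ σ l → σ q ≤ σ j := by
    intro i j l h1 h2 hi hl
    by_contra hj
    push_neg at hj
    have h3 : σ i < σ j := hσ i j l (Or.inl ⟨h1, h2⟩) (lt_of_lt_of_le hj hl)
    exact absurd (lt_trans h3 hj) (not_lt.mpr hi)
  have hq_le : ∀ i, σ q ≤ σ i → q ≤ i := by
    intro i h
    rcases eq_or_lt_of_le h with he | hl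
    · exact le_of_eq (σ.injective he)
    · exact le_of_lt (hplus i hl)
  have convq : ∀ i j : Fin (m+1), q ≤ j → j ≤ i → σ q ≤ σ i → σ q ≤ σ j := by
    intro i j hqj hji hi
    rcases eq_or_lt_of_le hqj with he | h1
    · exact le_of_eq (congrArg σ he)
    rcases eq_or_lt_of_le hji with he | h2
    · exact he ▸ hi
    exact conv q j i h1 h2 (le_refl _) hi
  have hbound : ∀ i : Fin (m+1), σ q ≤ σ i → (i : ℕ) - q ≤ m - r := by
    intro i hi
    have hqi : q ≤ i := hq_le i hi
    have hcard : (Finset.Icc q i).card ≤ (Finset.Icc (σ q) (Fin.last m)).card := by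
      apply Finset.card_le_card_of_injOn σ
      · intro j hj
        rw [Finset.mem_coe, Finset.mem_Icc] at hj ⊢
        exact ⟨convq i j hj.1 hj.2 hi, Fin.le_last _⟩
      · exact Set.injOn_of_injective σ.injective
    rw [Fin.card_Icc, Fin.card_Icc] at hcard
    simp only [Fin.val_last] at hcard
    have := Fin.le_iff_val_le_val.mp hqi
    omega
  -- the new vote
  set f : Fin (m+1) → Fin (m+1) := fun i =>
    if σ q ≤ σ i then ⟨m - ((i : ℕ) - (q : ℕ)), by omega⟩ else σ i with hf
  have hfU : ∀ i, σ q ≤ σ i → (f i : ℕ) = m - ((i : ℕ) - q) := by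
    intro i h; simp [hf, if_pos h]
  have hfN : ∀ i, ¬ σ q ≤ σ i → f i = σ i := by
    intro i h; simp [hf, if_neg h]
  have hfU_ge : ∀ i, σ q ≤ σ i → r ≤ (f i : ℕ) := by
    intro i h
    have := hbound i h
    rw [hfU i h]; omega
  have hfN_lt : ∀ i, ¬ σ q ≤ σ i → (f i : ℕ) < r := by
    intro i h
    rw [hfN i h]
    exact Fin.lt_iff_val_lt_val.mp (lt_of_not_ge h)
  have hfi_le : ∀ i, (f i : ℕ) ≤ m := fun i => Nat.lt_succ_iff.mp (f i).isLt
  have hinj : Function.Injective f := by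
    intro i j hij
    by_cases hi : σ q ≤ σ i <;> by_cases hj : σ q ≤ σ j
    · have h1 := hfU i hi
      have h2 := hfU j hj
      have hqi := Fin.le_iff_val_le_val.mp (hq_le i hi)
      have hqj := Fin.le_iff_val_le_val.mp (hq_le j hj)
      have hi' := Nat.lt_succ_iff.mp i.isLt
      have hj' := Nat.lt_succ_iff.mp j.isLt
      have : (f i : ℕ) = (f j : ℕ) := congrArg Fin.val hij
      rw [h1, h2] at this
      exact Fin.ext (by omega)
    · exact absurd (hij ▸ hfU_ge i hi) (not_le.mpr (hfN_lt j hj))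
    · exact absurd (hij.symm ▸ hfU_ge j hj) (not_le.mpr (hfN_lt i hi))
    · exact σ.injective (by rw [← hfN i hi, ← hfN j hj, hij])
  let σ' : Fin (m+1) ≃ Fin (m+1) := Equiv.ofBijective f (Finite.injective_iff_bijective.mp hinj)
  have hσ'f : ∀ i, σ' i = f i := fun i => rfl
  have htop : (σ' q : ℕ) = m := by
    rw [hσ'f, hfU q (le_refl _)]
    omega
  -- single-peakedness of f with peak q
  have hup : ∀ i j : Fin (m+1), i < j → j ≤ q → f i < f j := by
    intro i j h1 h2
    rcases eq_or_lt_of_le h2 with he | h2'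
    · have hiN : ¬ σ q ≤ σ i := fun hc => absurd (hq_le i hc) (not_le.mpr (he ▸ h1))
      rw [Fin.lt_iff_val_lt_val, hfN i hiN, he, hfU q (le_refl _)]
      have : (σ i : ℕ) < r := Fin.lt_iff_val_lt_val.mp (lt_of_not_ge hiN)
      omega
    · have hiN : ¬ σ q ≤ σ i := fun hc => absurd (hq_le i hc) (not_le.mpr (lt_trans h1 h2'))
      have hjN : ¬ σ q ≤ σ j := fun hc => absurd (hq_le j hc) (not_le.mpr h2')
      rw [hfN i hiN, hfN j hjN]
      exact hσ i j q (Or.inl ⟨h1, h2'⟩) (lt_of_not_ge hjN)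
  have hdown : ∀ i j : Fin (m+1), q ≤ j → j < i → f i < f j := by
    intro i j h1 h2
    rcases eq_or_lt_of_le h1 with he | h1'
    · have h2' : q < i := lt_of_le_of_lt h1 h2
      rw [Fin.lt_iff_val_lt_val, ← he, hfU q (le_refl _)]
      have hqi := Fin.lt_iff_val_lt_val.mp h2'
      have hi' := Nat.lt_succ_iff.mp i.isLt
      by_cases hiU : σ q ≤ σ i
      · rw [hfU i hiU]
        have := hbound i hiU
        omega
      · have : (σ i : ℕ) < r := Fin.lt_iff_val_lt_val.mp (lt_of_not_ge hiU)
        rw [hfN i hiU]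
        omega
    · by_cases hjU : σ q ≤ σ j
      · by_cases hiU : σ q ≤ σ i
        · rw [Fin.lt_iff_val_lt_val, hfU i hiU, hfU j hjU]
          have h2' := Fin.lt_iff_val_lt_val.mp h2
          have h1'' := Fin.lt_iff_val_lt_val.mp h1'
          have := hbound i hiU
          have := hbound j hjU
          omega
        · rw [Fin.lt_iff_val_lt_val]
          exact lt_of_lt_of_le (hfN_lt i hiU) (hfU_ge j hjU)
      · by_cases hiU : σ q ≤ σ i
        · exact absurd (convq i j (le_of_lt h1') (le_of_lt h2) hiU) hjU
        · rw [hfN i hiU, hfN j hjU]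
          exact hσ i j q (Or.inr ⟨h1', h2⟩) (lt_of_not_ge hjU)
  refine ⟨σ', sp_coincident σ' q (fun i j a b => hup i j a b) (fun i j a b => hdown i j a b), htop, ?_⟩
  intro i
  by_cases hiU : σ q ≤ σ i
  · have := Fin.le_iff_val_le_val.mp hiU
    have := hfi_le i
    rw [hσ'f]
    omega
  · rw [hσ'f, hfN i hiU]
    omega

lemma key (σ : Fin (m+1) ≃ Fin (m+1)) (q : Fin (m+1))
    (hσ : Coincident (Equiv.refl (Fin (m+1))) σ) :
    ∃ σ' : Fin (m+1) ≃ Fin (m+1),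
      Coincident (Equiv.refl (Fin (m+1))) σ' ∧ ((σ' q : ℕ) = m) ∧
      ∀ i, (σ' i : ℕ) ≤ (σ i : ℕ) + (m - (σ q : ℕ)) := by
  rcases cases_side σ q hσ with hp | hmin
  · exact keyA σ q hσ hp
  · set τ : Fin (m+1) ≃ Fin (m+1) := Fin.revPerm.trans σ with hτdef
    have hτ := coincident_rev σ hσ
    have hτval : ∀ i : Fin (m+1), τ i = σ i.rev := fun i => rfl
    have hτq : τ q.rev = σ q := by rw [hτval, Fin.rev_rev]
    have hplus : ∀ i, τ q.rev < τ i → q.rev < i := by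
      intro i hi
      rw [hτq, hτval] at hi
      have := hmin i.rev hi
      have := Fin.rev_lt_rev.mpr this
      rwa [Fin.rev_rev] at this
    obtain ⟨τ', hc, htop, hb⟩ := keyA τ q.rev hτ hplus
    refine ⟨Fin.revPerm.trans τ', coincident_rev τ' hc, ?_, ?_⟩
    · show ((τ' q.rev : ℕ)) = m
      exact htop
    · intro i
      have h := hb i.rev
      rw [hτval, Fin.rev_rev, hτq] at h
      exact h

end Aux

/-- In single-peaked unweighted Borda manipulation, if a successful
manipulation (all manipulator votes coincident with the harmonious order `L`)
exists, then one exists in which every manipulator places `p` (modelled as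
`none`) in the highest position. -/
theorem sp_manipulation_p_on_top (m t : ℕ)
    (L : Option (Fin m) ≃ Fin (m + 1)) (s : Fin m → ℕ) (sp : ℕ)
    (h : ∃ π : Fin t → (Option (Fin m) ≃ Fin (m + 1)),
        (∀ z, Coincident L (π z)) ∧
        (∀ c : Fin m,
          s c + ∑ z, ((π z (some c) : ℕ)) < sp + ∑ z, ((π z none : ℕ)))) :
    ∃ π : Fin t → (Option (Fin m) ≃ Fin (m + 1)),
      (∀ z, Coincident L (π z)) ∧
      (∀ z, (π z none : ℕ) = m) ∧
      (∀ c : Fin m,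
        s c + ∑ z, ((π z (some c) : ℕ)) < sp + ∑ z, ((π z none : ℕ))) := by
  obtain ⟨π, hco, hwin⟩ := h
  -- convert each vote to a permutation of positions
  have hcoσ : ∀ z, Coincident (Equiv.refl (Fin (m+1))) (L.symm.trans (π z)) := by
    intro z a b c hbet hbc
    simp only [Equiv.refl_apply] at hbet
    simp only [Equiv.trans_apply] at hbc ⊢
    refine hco z (L.symm a) (L.symm b) (L.symm c) ?_ hbc
    simpa only [Equiv.apply_symm_apply] using hbet
  choose σ' hc htop hb using fun z => key (L.symm.trans (π z)) (L none) (hcoσ z)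
  refine ⟨fun z => L.trans (σ' z), ?_, ?_, ?_⟩
  · intro z a b c hbet hbc
    simp only [Equiv.trans_apply] at hbc ⊢
    exact hc z (L a) (L b) (L c) hbet hbc
  · intro z
    exact htop z
  · intro c
    have hper : ∀ z, ((L.trans (σ' z)) (some c) : ℕ) ≤
        (π z (some c) : ℕ) + (m - (π z none : ℕ)) := by
      intro z
      have h := hb z (L (some c))
      simp only [Equiv.trans_apply, Equiv.symm_apply_apply] at h
      exact h
    have hle : ∀ z : Fin t, (π z none : ℕ) ≤ m := fun z => Nat.lt_succ_iff.mp (π z none).isLt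
    calc s c + ∑ z, ((L.trans (σ' z)) (some c) : ℕ)
        ≤ s c + ∑ z, ((π z (some c) : ℕ) + (m - (π z none : ℕ))) := by
          exact Nat.add_le_add_left (Finset.sum_le_sum fun z _ => hper z) _
      _ = (s c + ∑ z, (π z (some c) : ℕ)) + ∑ z, (m - (π z none : ℕ)) := by
          rw [Finset.sum_add_distrib]; ring
      _ < (sp + ∑ z, (π z none : ℕ)) + ∑ z, (m - (π z none : ℕ)) :=
          Nat.add_lt_add_right (hwin c) _
      _ = sp + ∑ z, ((π z none : ℕ) + (m - (π z none : ℕ))) := by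
          rw [Finset.sum_add_distrib]; ring
      _ = sp + ∑ z, (m : ℕ) := by
          congr 1
          exact Finset.sum_congr rfl fun z _ => by have := hle z; omega
      _ = sp + ∑ z, ((L.trans (σ' z)) none : ℕ) := by
          congr 1
          exact (Finset.sum_congr rfl fun z _ => (htop z).symm)
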